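/- Let φ: ℕ^G → ℝ be exp-summable and continuous with finite oscillation, and let ν be a Borel probability measure on ℕ^G with ∫φ dν > −∞. Then the Shannon entropy H(ν) = −Σ_{a∈ℕ} ν([a]) log ν([a]) is finite. If moreover ν is G-invariant, then H_F(ν) = −Σ_{w∈ℕ^F} ν([w]) log ν([w]) is finite for every finite F ⊆ G, with H_F(ν) ≤ |F|(log Z_{1_G}(φ) − ∫φ dν). -/

import Mathlib

open scoped Pointwise symmDiff
open Filter MeasureTheory

variable {G : Type*} [Group G] [DecidableEq G]

/-- The (right) shift action of `G` on `ℕ^G`: `(g · x)(h) = x(hg)`. -/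
def shift (g : G) (x : G → ℕ) : G → ℕ := fun h => x (h * g)

/-- `φ_F(x) = Σ_{g ∈ F} φ(g · x)`. -/
noncomputable def phiSum (φ : (G → ℕ) → ℝ) (F : Finset G) (x : G → ℕ) : ℝ :=
  ∑ g ∈ F, φ (shift g x)

/-- The variation `δ_E(φ) = sup {|φ(x) - φ(y)| : x_E = y_E}`. -/
noncomputable def pvar (φ : (G → ℕ) → ℝ) (E : Set G) : ℝ :=
  sSup {d | ∃ x y : G → ℕ, (∀ g ∈ E, x g = y g) ∧ d = |φ x - φ y|}

/-- An exhausting sequence for `G`. -/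
structure IsExhaustion (E : ℕ → Finset G) : Prop where
  empty : E 0 = ∅
  one_mem : (1 : G) ∈ E 1
  mono : ∀ m, E m ⊆ E (m + 1)
  exhaust : ∀ g : G, ∃ m, g ∈ E m

/-- The `m`-th term (reindexed from `m ≥ 1`) of the `F`-sum of variations
`V_F(φ) = Σ_{m ≥ 1} |E_{m+1}⁻¹ F \ E_m⁻¹ F| · δ_{E_m}(φ)`. -/
noncomputable def vterm (φ : (G → ℕ) → ℝ) (E : ℕ → Finset G) (F : Finset G) (m : ℕ) : ℝ :=
  ((((E (m + 2))⁻¹ * F) \ ((E (m + 1))⁻¹ * F)).card : ℝ) *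
    pvar φ ((E (m + 1) : Finset G) : Set G)

/-- The `F`-sum of variations `V_F(φ)` (according to the exhausting sequence `E`). -/
noncomputable def VF (φ : (G → ℕ) → ℝ) (E : ℕ → Finset G) (F : Finset G) : ℝ :=
  ∑' m : ℕ, vterm φ E F m

/-- Finiteness of the `F`-sum of variations. -/
def SummableVarF (φ : (G → ℕ) → ℝ) (E : ℕ → Finset G) (F : Finset G) : Prop :=
  Summable (vterm φ E F)

/-- `φ` has summable variation according to `E`: `V(φ) = V_{{1}}(φ) < ∞`. -/
def SummableVariation (φ : (G → ℕ) → ℝ) (E : ℕ → Finset G) : Prop :=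
  SummableVarF φ E {1}

/-- `F` is `(K, δ)`-invariant: `|KF △ F| < δ |F|`. -/
def FInv (K : Finset G) (δ : ℝ) (F : Finset G) : Prop :=
  (((K * F) ∆ F).card : ℝ) < δ * F.card

/-- `G` is amenable: `(K,δ)`-invariant nonempty finite sets exist for all `K, δ`. -/
def Amen : Prop :=
  ∀ (K : Finset G) (δ : ℝ), 0 < δ → ∃ F : Finset G, F.Nonempty ∧ FInv K δ F

/-- `sup φ_F([w])` for a pattern `w` on `F` (countable alphabet `ℕ`). -/
noncomputable def cylSup (φ : (G → ℕ) → ℝ) (F : Finset G) (w : ↥F → ℕ) : ℝ :=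
  sSup {r | ∃ x : G → ℕ, (∀ g : ↥F, x g = w g) ∧ r = phiSum φ F x}

/-- The partition function `Z_F(φ) = Σ_{w ∈ ℕ^F} exp (sup φ_F([w]))`. -/
noncomputable def ZF (φ : (G → ℕ) → ℝ) (F : Finset G) : ℝ :=
  ∑' w : ↥F → ℕ, Real.exp (cylSup φ F w)

/-- `sup φ_F([w] ∩ A^G)` for a pattern `w` on `F` restricted to a finite alphabet `A`. -/
noncomputable def cylSupA (φ : (G → ℕ) → ℝ) (A : Finset ℕ) (F : Finset G) (w : ↥F → ℕ) : ℝ :=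
  sSup {r | ∃ x : G → ℕ, (∀ g : G, x g ∈ A) ∧ (∀ g : ↥F, x g = w g) ∧ r = phiSum φ F x}

/-- The finite-alphabet partition function `Z_F(A, φ)`. -/
noncomputable def ZFA (φ : (G → ℕ) → ℝ) (A : Finset ℕ) (F : Finset G) : ℝ :=
  ∑ w : ↥F → ↥A, Real.exp (cylSupA φ A F (fun g => (w g : ℕ)))

/-- `φ` is exp-summable: `Z_{1_G}(φ) = Σ_a exp (sup φ([a])) < ∞`. -/
def ExpSummable (φ : (G → ℕ) → ℝ) : Prop :=
  Summable (fun a : ℕ => Real.exp (sSup {r | ∃ x : G → ℕ, x 1 = a ∧ r = φ x}))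

/-- Coordinate-wise application of a family of permutations of `ℕ`. -/
def permApp (σ : G → Equiv.Perm ℕ) (x : G → ℕ) : G → ℕ := fun g => σ g (x g)

/-- The family `σ` is supported on `K`. -/
def SupportedOn (σ : G → Equiv.Perm ℕ) (K : Finset G) : Prop := ∀ g ∉ K, σ g = 1

/-- `φ_F^τ = φ_F ∘ τ⁻¹ - φ_F` for the coordinate-wise permutation `τ` given by `σ`. -/
noncomputable def phiTau (φ : (G → ℕ) → ℝ) (F : Finset G) (σ : G → Equiv.Perm ℕ)
    (x : G → ℕ) : ℝ :=
  phiSum φ F (permApp (fun g => (σ g)⁻¹) x) - phiSum φ F x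

/-- The family of the translated permutation `g · τ = τ_{K g⁻¹}`. -/
def transPerm (σ : G → Equiv.Perm ℕ) (g : G) : G → Equiv.Perm ℕ := fun h => σ (h * g)

/-- Replace a configuration by the pattern `w` on `K`. -/
def patch (K : Finset G) (w x : G → ℕ) : G → ℕ := fun g => if g ∈ K then w g else x g

/-- The involution `τ_{w,v}` exchanging the patterns `w` and `v` on `K`. -/
def swapKV (K : Finset G) (w v x : G → ℕ) : G → ℕ :=
  if ∀ g ∈ K, x g = w g then patch K v x
  else if ∀ g ∈ K, x g = v g then patch K w x
  else x

/-- Extension of a `K`-pattern to a full configuration (by `0` off `K`). -/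
def extK (K : Finset G) (v : ↥K → ℕ) : G → ℕ :=
  fun g => if h : g ∈ K then v ⟨g, h⟩ else 0

/-- The cylinder of configurations agreeing with `x` on `F`. -/
def cylEvent (F : Finset G) (x : G → ℕ) : Set (G → ℕ) := {y | ∀ g ∈ F, y g = x g}

/-- The cylinder of configurations realizing the `F`-pattern `w`. -/
def cylPat (F : Finset G) (w : ↥F → ℕ) : Set (G → ℕ) := {x | ∀ g : ↥F, x g = w g}

/-- `μ` is a Bowen-Gibbs measure for `φ` with constant `p`. -/
def IsBowenGibbs (φ : (G → ℕ) → ℝ) (μ : Measure (G → ℕ)) (p : ℝ) : Prop :=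
  ∀ ε : ℝ, 0 < ε → ∃ (K : Finset G) (δ : ℝ), 0 < δ ∧
    ∀ F : Finset G, F.Nonempty → FInv K δ F → ∀ x : G → ℕ,
      Real.exp (-(ε * F.card)) ≤
          (μ (cylEvent F x)).toReal / Real.exp (phiSum φ F x - p * F.card) ∧
      (μ (cylEvent F x)).toReal / Real.exp (phiSum φ F x - p * F.card) ≤
          Real.exp (ε * F.card)

/-- The Shannon entropy `H_F(μ)` of the `F`-refinement of the canonical partition. -/
noncomputable def HFent (μ : Measure (G → ℕ)) (F : Finset G) : ℝ :=
  ∑' w : ↥F → ℕ, Real.negMulLog ((μ (cylPat F w)).toReal)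

section Aux
open MeasureTheory

-- per-term Gibbs inequality
lemma negMulLog_le_aux {p q : ℝ} (hp : 0 ≤ p) (hq : 0 < q) :
    Real.negMulLog p ≤ -(p * Real.log q) + (q - p) := by
  rcases eq_or_lt_of_le hp with h | hp
  · simp [← h, Real.negMulLog, hq.le]
  · have hlog : Real.log (q / p) ≤ q / p - 1 := Real.log_le_sub_one_of_pos (div_pos hq hp)
    rw [Real.log_div hq.ne' hp.ne'] at hlog
    have h2 := mul_le_mul_of_nonneg_left hlog hp.le
    have h3 : p * (q / p) = q := by field_simp
    simp only [Real.negMulLog, neg_mul]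
    nlinarith

lemma summable_between {I : Type*} {f g h : I → ℝ} (hg : Summable g) (hh : Summable h)
    (h1 : ∀ i, g i ≤ f i) (h2 : ∀ i, f i ≤ h i) : Summable f := by
  have hs : Summable (fun i => f i - g i) :=
    Summable.of_nonneg_of_le (fun i => sub_nonneg.2 (h1 i))
      (fun i => sub_le_sub_right (h2 i) _) (hh.sub hg)
  simpa using hs.add hg

lemma gibbs_bound {I : Type*} (P Q : I → ℝ)
    (hP0 : ∀ i, 0 ≤ P i) (hP1 : ∀ i, P i ≤ 1) (hQ0 : ∀ i, 0 < Q i)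
    (hPsum : Summable P) (hPt : ∑' i, P i = 1)
    (hQsum : Summable Q) (hQt : ∑' i, Q i = 1)
    (hPQ : Summable fun i => P i * Real.log (Q i)) :
    Summable (fun i => Real.negMulLog (P i)) ∧
      ∑' i, Real.negMulLog (P i) ≤ -∑' i, P i * Real.log (Q i) := by
  have hb : ∀ i, Real.negMulLog (P i) ≤ -(P i * Real.log (Q i)) + (Q i - P i) :=
    fun i => negMulLog_le_aux (hP0 i) (hQ0 i)
  have hs : Summable (fun i => -(P i * Real.log (Q i)) + (Q i - P i)) :=
    hPQ.neg.add (hQsum.sub hPsum)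
  have hnn : ∀ i, 0 ≤ Real.negMulLog (P i) := fun i => Real.negMulLog_nonneg (hP0 i) (hP1 i)
  have hsum := Summable.of_nonneg_of_le hnn hb hs
  refine ⟨hsum, ?_⟩
  calc ∑' i, Real.negMulLog (P i) ≤ ∑' i, (-(P i * Real.log (Q i)) + (Q i - P i)) :=
        Summable.tsum_le_tsum hb hsum hs
    _ = -∑' i, P i * Real.log (Q i) + (∑' i, Q i - ∑' i, P i) := by
        rw [Summable.tsum_add hPQ.neg (hQsum.sub hPsum), tsum_neg, Summable.tsum_sub hQsum hPsum]
    _ = -∑' i, P i * Real.log (Q i) := by rw [hPt, hQt]; ring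

-- tsum over pi types in ℝ≥0∞
lemma tsum_pi_fin (f : ℕ → ENNReal) :
    ∀ n, ∑' w : Fin n → ℕ, ∏ i, f (w i) = (∑' a, f a) ^ n := by
  intro n
  induction n with
  | zero =>
    rw [tsum_eq_single (fun _ => 0) (fun b' hb' => absurd (Subsingleton.elim b' _) hb')]
    simp
  | succ n ih =>
    calc ∑' w : Fin (n+1) → ℕ, ∏ i, f (w i)
        = ∑' p : ℕ × (Fin n → ℕ), (f p.1 * ∏ i, f (p.2 i)) := by
          rw [← (Fin.consEquiv (fun _ : Fin (n+1) => ℕ)).tsum_eq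
            (fun w : Fin (n+1) → ℕ => ∏ i, f (w i))]
          refine tsum_congr fun p => ?_
          simp [Fin.consEquiv, Fin.prod_univ_succ]
      _ = (∑' a, f a) ^ (n + 1) := by
          rw [ENNReal.tsum_prod']
          simp_rw [ENNReal.tsum_mul_left]
          rw [ih, ENNReal.tsum_mul_right, pow_succ]
          ring


lemma tsum_pi_ennreal {ι : Type*} [Fintype ι] (f : ℕ → ENNReal) :
    ∑' w : ι → ℕ, ∏ i, f (w i) = (∑' a, f a) ^ (Fintype.card ι) := by
  classical
  rw [← tsum_pi_fin f (Fintype.card ι)]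
  rw [← (Equiv.arrowCongr (Fintype.equivFin ι).symm (Equiv.refl ℕ)).tsum_eq
    (fun w : ι → ℕ => ∏ i, f (w i))]
  refine tsum_congr fun v => ?_
  simp only [Equiv.arrowCongr_apply, Equiv.refl_symm, Equiv.symm_symm, Equiv.coe_refl,
    Function.comp]
  exact Equiv.prod_comp (Fintype.equivFin ι) (fun j => f (v j))

/-- Real version: tsum over a finite product of a nonneg summable with sum 1. -/
lemma tsum_pi_real {ι : Type*} [Fintype ι] (r : ℕ → ℝ) (hr0 : ∀ a, 0 < r a)
    (hrs : Summable r) (hr1 : ∑' a, r a = 1) :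
    Summable (fun w : ι → ℕ => ∏ i, r (w i)) ∧ ∑' w : ι → ℕ, ∏ i, r (w i) = 1 := by
  have key : ∑' w : ι → ℕ, ENNReal.ofReal (∏ i, r (w i)) = 1 := by
    have h1 : ∀ w : ι → ℕ, ENNReal.ofReal (∏ i, r (w i)) = ∏ i, ENNReal.ofReal (r (w i)) :=
      fun w => ENNReal.ofReal_prod_of_nonneg (fun i _ => (hr0 (w i)).le)
    simp_rw [h1]
    rw [tsum_pi_ennreal (fun a => ENNReal.ofReal (r a))]
    rw [← ENNReal.ofReal_tsum_of_nonneg (fun a => (hr0 a).le) hrs, hr1]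
    simp
  have hsum : Summable (fun w : ι → ℕ => ∏ i, r (w i)) := by
    have := ENNReal.summable_toReal (f := fun w : ι → ℕ => ENNReal.ofReal (∏ i, r (w i)))
      (by rw [key]; exact ENNReal.one_ne_top)
    refine this.congr fun w => ?_
    exact ENNReal.toReal_ofReal (Finset.prod_nonneg fun i _ => (hr0 (w i)).le)
  refine ⟨hsum, ?_⟩
  have := ENNReal.tsum_toReal_eq (f := fun w : ι → ℕ => ENNReal.ofReal (∏ i, r (w i)))
    (fun w => ENNReal.ofReal_ne_top)
  rw [key, ENNReal.toReal_one] at this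
  rw [this]
  exact tsum_congr fun w =>
    (ENNReal.toReal_ofReal (Finset.prod_nonneg fun i _ => (hr0 (w i)).le)).symm

/-- A countable measurable partition of a probability space. -/
lemma measure_partition {α : Type*} [MeasurableSpace α] {I : Type*} [Countable I]
    (μ : Measure α) [IsProbabilityMeasure μ] (A : I → Set α)
    (hm : ∀ i, MeasurableSet (A i)) (hd : Pairwise (Function.onFun Disjoint A))
    (hu : ⋃ i, A i = Set.univ) :
    Summable (fun i => (μ (A i)).toReal) ∧ ∑' i, (μ (A i)).toReal = 1 := by
  have key : ∑' i, μ (A i) = 1 := by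
    rw [← measure_iUnion hd hm, hu, measure_univ]
  constructor
  · exact ENNReal.summable_toReal (by rw [key]; exact ENNReal.one_ne_top)
  · rw [← ENNReal.tsum_toReal_eq (fun i => measure_ne_top μ (A i)), key, ENNReal.toReal_one]

/-- Decomposition of an integral over a countable measurable partition. -/
lemma integral_partition {α : Type*} [MeasurableSpace α] {I : Type*} [Countable I]
    (μ : Measure α) (A : I → Set α) (f : α → ℝ)
    (hm : ∀ i, MeasurableSet (A i)) (hd : Pairwise (Function.onFun Disjoint A))
    (hu : ⋃ i, A i = Set.univ) (hf : Integrable f μ) :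
    HasSum (fun i => ∫ x in A i, f x ∂μ) (∫ x, f x ∂μ) := by
  have := MeasureTheory.hasSum_integral_iUnion hm hd (by rw [hu]; exact hf.integrableOn)
  rwa [hu, setIntegral_univ] at this

end Aux

/-- if `φ` is exp-summable, continuous, with finite oscillation, and
`∫ φ dν > -∞` (i.e. `φ` is `ν`-integrable), then the Shannon entropy `H(ν)` is finite;
and if moreover `ν` is `G`-invariant, `H_F(ν)` is finite for every finite `F`, with
`H_F(ν) ≤ |F| (log Z_{1_G}(φ) − ∫ φ dν)`. -/
theorem finite_Shannon_entropy
    (φ : (G → ℕ) → ℝ) (hexp : ExpSummable φ) (hcont : Continuous φ)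
    (hosc : BddAbove {d | ∃ x y : G → ℕ, x 1 = y 1 ∧ d = |φ x - φ y|})
    (ν : Measure (G → ℕ)) [IsProbabilityMeasure ν] (hint : Integrable φ ν) :
    Summable (fun a : ℕ => Real.negMulLog ((ν {x : G → ℕ | x 1 = a}).toReal)) ∧
    ((∀ g : G, MeasurePreserving (shift g) ν ν) →
      ∀ F : Finset G,
        Summable (fun w : ↥F → ℕ => Real.negMulLog ((ν (cylPat F w)).toReal)) ∧
        HFent ν F ≤ (F.card : ℝ) *
          (Real.log (∑' a : ℕ, Real.exp (sSup {r | ∃ x : G → ℕ, x 1 = a ∧ r = φ x})) -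
            ∫ x, φ x ∂ν)) := by

  classical
  obtain ⟨D, hD⟩ := hosc
  set s : ℕ → ℝ := fun a => sSup {r | ∃ x : G → ℕ, x 1 = a ∧ r = φ x} with hs_def
  have hbdd : ∀ a : ℕ, BddAbove {r | ∃ x : G → ℕ, x 1 = a ∧ r = φ x} := by
    intro a
    refine ⟨φ (fun _ => a) + D, ?_⟩
    rintro r ⟨x, hx1, rfl⟩
    have h1 : |φ x - φ (fun _ => a)| ≤ D := hD ⟨x, (fun _ => a), hx1, rfl⟩
    have h2 := (abs_le.1 h1).2
    linarith
  have hs_le : ∀ x : G → ℕ, φ x ≤ s (x 1) := fun x => le_csSup (hbdd (x 1)) ⟨x, rfl, rfl⟩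
  have hZsum : Summable (fun a => Real.exp (s a)) := hexp
  set Z : ℝ := ∑' a, Real.exp (s a) with hZ_def
  have hZpos : 0 < Z := Summable.tsum_pos hZsum (fun a => (Real.exp_pos _).le) 0 (Real.exp_pos _)
  have hsZ : ∀ a, s a ≤ Real.log Z := by
    intro a
    have h1 : Real.exp (s a) ≤ Z := Summable.le_tsum hZsum a (fun b _ => (Real.exp_pos (s b)).le)
    calc s a = Real.log (Real.exp (s a)) := (Real.log_exp _).symm
      _ ≤ Real.log Z := Real.log_le_log (Real.exp_pos _) h1
  -- the one-coordinate partition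
  set A : ℕ → Set (G → ℕ) := fun a => {x | x 1 = a} with hA_def
  have hAm : ∀ a, MeasurableSet (A a) := by
    intro a
    have h : A a = (fun x : G → ℕ => x 1) ⁻¹' {a} := rfl
    rw [h]
    exact (measurable_pi_apply (1 : G)) (measurableSet_singleton a)
  have hAd : Pairwise (Function.onFun Disjoint A) := fun a b hab =>
    Set.disjoint_left.2 fun x hxa hxb => hab ((hxa : x 1 = a).symm.trans hxb)
  have hAu : ⋃ a, A a = Set.univ :=
    Set.eq_univ_iff_forall.2 fun x => Set.mem_iUnion.2 ⟨x 1, rfl⟩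
  obtain ⟨hpsum, hpt⟩ := measure_partition ν A hAm hAd hAu
  set p : ℕ → ℝ := fun a => (ν (A a)).toReal with hp_def
  have hp0 : ∀ a, 0 ≤ p a := fun a => ENNReal.toReal_nonneg
  have hp1 : ∀ a, p a ≤ 1 := fun a => by
    simpa using ENNReal.toReal_mono ENNReal.one_ne_top (prob_le_one (μ := ν) (s := A a))
  -- integral lower bound
  have hint_part := integral_partition ν A φ hAm hAd hAu hint
  have hlow : ∀ a, ∫ x in A a, φ x ∂ν ≤ p a * s a := by
    intro a
    have h1 : ∫ x in A a, φ x ∂ν ≤ ∫ _x in A a, s a ∂ν := by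
      refine setIntegral_mono_on hint.integrableOn
        (integrableOn_const (measure_ne_top ν (A a))) (hAm a) ?_
      intro x hx
      have := hs_le x
      rwa [show x 1 = a from hx] at this
    rwa [setIntegral_const, smul_eq_mul] at h1
  have hupp : ∀ a, p a * s a ≤ p a * Real.log Z :=
    fun a => mul_le_mul_of_nonneg_left (hsZ a) (hp0 a)
  have hps_sum : Summable (fun a => p a * s a) :=
    summable_between hint_part.summable (hpsum.mul_right (Real.log Z)) hlow hupp
  have hps_ge : ∫ x, φ x ∂ν ≤ ∑' a, p a * s a := by
    rw [← hint_part.tsum_eq]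
    exact Summable.tsum_le_tsum hlow hint_part.summable hps_sum
  -- the reference weights
  set r : ℕ → ℝ := fun a => Real.exp (s a) / Z with hr_def
  have hr0 : ∀ a, 0 < r a := fun a => div_pos (Real.exp_pos _) hZpos
  have hrsum : Summable r := hZsum.div_const Z
  have hrt : ∑' a, r a = 1 := by
    rw [hr_def]
    rw [(hZsum.hasSum.div_const Z).tsum_eq]
    exact div_self hZpos.ne'
  have hlogr : ∀ a, Real.log (r a) = s a - Real.log Z := fun a => by
    rw [hr_def, Real.log_div (Real.exp_pos _).ne' hZpos.ne', Real.log_exp]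
  -- part 1 via Gibbs
  have hPQ1 : Summable (fun a => p a * Real.log (r a)) := by
    have : (fun a => p a * Real.log (r a)) =
        fun a => p a * s a - p a * Real.log Z := by
      funext a; rw [hlogr a]; ring
    rw [this]
    exact hps_sum.sub (hpsum.mul_right _)
  have hgibbs1 := gibbs_bound p r hp0 hp1 hr0 hpsum hpt hrsum hrt hPQ1
  refine ⟨hgibbs1.1, ?_⟩
  -- part 2
  intro hinv F
  have hshift_meas : ∀ g : G, Measurable (shift g) := fun g =>
    measurable_pi_lambda _ (fun h => measurable_pi_apply (h * g))
  -- the F-cylinder partition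
  have hBm : ∀ w : ↥F → ℕ, MeasurableSet (cylPat F w) := by
    intro w
    have : cylPat F w = ⋂ g : ↥F, (fun x : G → ℕ => x (g : G)) ⁻¹' {w g} := by
      ext x; simp [cylPat]
    rw [this]
    exact MeasurableSet.iInter fun g =>
      (measurable_pi_apply ((g : G))) (measurableSet_singleton (w g))
  have hBd : Pairwise (Function.onFun Disjoint (cylPat F)) := fun w w' hne =>
    Set.disjoint_left.2 fun x hx hx' => hne (funext fun g => (hx g).symm.trans (hx' g))
  have hBu : ⋃ w, cylPat F w = Set.univ :=
    Set.eq_univ_iff_forall.2 fun x => Set.mem_iUnion.2 ⟨fun g => x g, fun g => rfl⟩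
  obtain ⟨hPsum, hPt⟩ := measure_partition ν (cylPat F) hBm hBd hBu
  set P : (↥F → ℕ) → ℝ := fun w => (ν (cylPat F w)).toReal with hP_def
  have hP0 : ∀ w, 0 ≤ P w := fun w => ENNReal.toReal_nonneg
  have hP1 : ∀ w, P w ≤ 1 := fun w => by
    simpa using ENNReal.toReal_mono ENNReal.one_ne_top (prob_le_one (μ := ν) (s := cylPat F w))
  set T : (↥F → ℕ) → ℝ := fun w => ∑ g : ↥F, s (w g) with hT_def
  set Q : (↥F → ℕ) → ℝ := fun w => ∏ g : ↥F, r (w g) with hQ_def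
  have hQ0 : ∀ w, 0 < Q w := fun w => Finset.prod_pos fun g _ => hr0 (w g)
  obtain ⟨hQsum, hQt⟩ := tsum_pi_real (ι := ↥F) r hr0 hrsum hrt
  have hcardF : (Fintype.card ↥F : ℝ) = (F.card : ℝ) := by rw [Fintype.card_coe]
  have hlogQ : ∀ w, Real.log (Q w) = T w - (F.card : ℝ) * Real.log Z := by
    intro w
    rw [hQ_def]
    rw [Real.log_prod (fun g _ => (hr0 (w g)).ne')]
    simp only [hlogr]
    rw [Finset.sum_sub_distrib, Finset.sum_const, Finset.card_univ]
    rw [hT_def, nsmul_eq_mul, hcardF]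
  -- φ_F is integrable with integral |F| ∫ φ
  have hshift_int : ∀ g : G, Integrable (fun x => φ (shift g x)) ν := by
    intro g
    have hmap : Measure.map (shift g) ν = ν := (hinv g).map_eq
    have h1 : Integrable φ (Measure.map (shift g) ν) := by rw [hmap]; exact hint
    have := (integrable_map_measure h1.1 (hshift_meas g).aemeasurable).1 h1
    exact this
  have hφF : Integrable (phiSum φ F) ν := by
    have : phiSum φ F = fun x => ∑ g ∈ F, φ (shift g x) := rfl
    rw [this]
    exact integrable_finset_sum F fun g _ => hshift_int g
  have hshift_integral : ∀ g : G, ∫ x, φ (shift g x) ∂ν = ∫ x, φ x ∂ν := by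
    intro g
    have hmap : Measure.map (shift g) ν = ν := (hinv g).map_eq
    conv_rhs => rw [← hmap]
    rw [integral_map (hshift_meas g).aemeasurable (by rw [hmap]; exact hint.1)]
  have hφF_integral : ∫ x, phiSum φ F x ∂ν = (F.card : ℝ) * ∫ x, φ x ∂ν := by
    have h1 : ∫ x, phiSum φ F x ∂ν = ∑ g ∈ F, ∫ x, φ (shift g x) ∂ν :=
      integral_finset_sum F fun g _ => hshift_int g
    rw [h1]
    rw [Finset.sum_congr rfl fun g _ => hshift_integral g]
    rw [Finset.sum_const, nsmul_eq_mul]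
  -- pointwise bound on cylinders
  have hTF : ∀ (w : ↥F → ℕ) (x : G → ℕ), x ∈ cylPat F w → phiSum φ F x ≤ T w := by
    intro w x hx
    have key : ∀ g : ↥F, φ (shift (g : G) x) ≤ s (w g) := by
      intro g
      have h1 := hs_le (shift (g : G) x)
      have h2 : shift (g : G) x 1 = x (g : G) := by rw [shift, one_mul]
      rw [h2, hx g] at h1
      exact h1
    calc phiSum φ F x = ∑ g ∈ F.attach, φ (shift (g : G) x) :=
          (Finset.sum_attach F fun g => φ (shift g x)).symm
      _ ≤ ∑ g ∈ F.attach, s (w g) := Finset.sum_le_sum fun g _ => key g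
      _ = T w := by rw [hT_def, Finset.univ_eq_attach]
  -- lower bound for P * T
  have hint_part2 := integral_partition ν (cylPat F) (phiSum φ F) hBm hBd hBu hφF
  have hlow2 : ∀ w, ∫ x in cylPat F w, phiSum φ F x ∂ν ≤ P w * T w := by
    intro w
    have h1 : ∫ x in cylPat F w, phiSum φ F x ∂ν ≤ ∫ _x in cylPat F w, T w ∂ν := by
      refine setIntegral_mono_on hφF.integrableOn
        (integrableOn_const (measure_ne_top ν _)) (hBm w) ?_
      exact fun x hx => hTF w x hx
    rwa [setIntegral_const, smul_eq_mul] at h1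
  have hTZ : ∀ w, T w ≤ (F.card : ℝ) * Real.log Z := by
    intro w
    rw [hT_def]
    calc ∑ g : ↥F, s (w g) ≤ ∑ _g : ↥F, Real.log Z :=
          Finset.sum_le_sum fun g _ => hsZ (w g)
      _ = (F.card : ℝ) * Real.log Z := by
          rw [Finset.sum_const, Finset.card_univ, nsmul_eq_mul, hcardF]
  have hupp2 : ∀ w, P w * T w ≤ P w * ((F.card : ℝ) * Real.log Z) :=
    fun w => mul_le_mul_of_nonneg_left (hTZ w) (hP0 w)
  have hPT_sum : Summable (fun w => P w * T w) :=
    summable_between hint_part2.summable (hPsum.mul_right _) hlow2 hupp2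
  have hPT_ge : (F.card : ℝ) * ∫ x, φ x ∂ν ≤ ∑' w, P w * T w := by
    rw [← hφF_integral, ← hint_part2.tsum_eq]
    exact Summable.tsum_le_tsum hlow2 hint_part2.summable hPT_sum
  -- Gibbs for part 2
  have hPQ2 : Summable (fun w => P w * Real.log (Q w)) := by
    have : (fun w => P w * Real.log (Q w)) =
        fun w => P w * T w - P w * ((F.card : ℝ) * Real.log Z) := by
      funext w; rw [hlogQ w]; ring
    rw [this]
    exact hPT_sum.sub (hPsum.mul_right _)
  have hgibbs2 := gibbs_bound P Q hP0 hP1 hQ0 hPsum hPt hQsum hQt hPQ2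
  refine ⟨hgibbs2.1, ?_⟩
  have hHF : HFent ν F = ∑' w, Real.negMulLog (P w) := rfl
  rw [hHF]
  have hsum_logQ : ∑' w, P w * Real.log (Q w) =
      (∑' w, P w * T w) - (F.card : ℝ) * Real.log Z := by
    have h1 : (fun w => P w * Real.log (Q w)) =
        fun w => P w * T w - P w * ((F.card : ℝ) * Real.log Z) := by
      funext w; rw [hlogQ w]; ring
    rw [h1, Summable.tsum_sub hPT_sum (hPsum.mul_right _), tsum_mul_right, hPt]
    ring
  calc ∑' w, Real.negMulLog (P w) ≤ -∑' w, P w * Real.log (Q w) := hgibbs2.2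
    _ = (F.card : ℝ) * Real.log Z - ∑' w, P w * T w := by rw [hsum_logQ]; ring
    _ ≤ (F.card : ℝ) * Real.log Z - (F.card : ℝ) * ∫ x, φ x ∂ν := by linarith
    _ = (F.card : ℝ) * (Real.log Z - ∫ x, φ x ∂ν) := by ring
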